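/- Let A be a diagonal Hermitian n×n matrix with diagonal entries λ₁ ≥ … ≥ λₙ, and F(A) = f(λ(A)) for a smooth symmetric f with fᵢ > 0 concave. If B is any Hermitian matrix with eigenvalues μ₁ ≥ … ≥ μₙ, then Σᵢ F^{ii}(A)·B_{ii} ≥ Σᵢ F^{ii}(A)·μᵢ, where F^{ii}(A) = fᵢ(λ) satisfies F^{11} ≤ F^{22} ≤ … ≤ F^{nn}. -/

import Mathlib

open Finset

theorem schur_horn_pairing_inequality
    (n : ℕ) (F : Fin n → ℝ) (hFpos : ∀ i, 0 < F i) (hFmono : Monotone F)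
    (lam : Fin n → ℝ) (hlam : Antitone lam)
    (B : Matrix (Fin n) (Fin n) ℂ) (hB : B.IsHermitian)
    (μ : Fin n → ℝ) (hμa : Antitone μ)
    (hμ : ∃ e : Equiv.Perm (Fin n), ∀ i, μ i = hB.eigenvalues (e i)) :
    ∑ i, F i * μ i ≤ ∑ i, F i * (B i i).re := by
  rcases Nat.eq_zero_or_pos n with hn | hn
  · subst hn; simp
  obtain ⟨e, he⟩ := hμ
  set U : Matrix (Fin n) (Fin n) ℂ := (hB.eigenvectorUnitary : Matrix (Fin n) (Fin n) ℂ)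
    with hUdef
  set D : Fin n → Fin n → ℝ := fun i j => Complex.normSq (U i (e j)) with hDdef
  have hD0 : ∀ i j, 0 ≤ D i j := fun i j => Complex.normSq_nonneg _
  -- row sums
  have hrow : ∀ i, ∑ j, D i j = 1 := by
    intro i
    have h : (U * star U) i i = 1 := by
      rw [Matrix.mem_unitaryGroup_iff.mp hB.eigenvectorUnitary.2]; simp
    rw [Matrix.mul_apply] at h
    have h2 := congrArg Complex.re h
    rw [Complex.re_sum] at h2
    simp only [Matrix.star_apply, Complex.one_re] at h2
    calc ∑ j, D i j = ∑ j, Complex.normSq (U i j) :=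
        Fintype.sum_equiv e _ _ (fun j => rfl)
      _ = 1 := by
        rw [← h2]; congr 1; ext j
        simp only [Complex.normSq_apply, Complex.mul_re, RCLike.star_def,
          Complex.conj_re, Complex.conj_im]
        ring
  -- column sums
  have hcol : ∀ j, ∑ i, D i j = 1 := by
    intro j
    have h : (star U * U) (e j) (e j) = 1 := by
      rw [Matrix.mem_unitaryGroup_iff'.mp hB.eigenvectorUnitary.2]; simp
    rw [Matrix.mul_apply] at h
    have h2 := congrArg Complex.re h
    rw [Complex.re_sum] at h2
    simp only [Matrix.star_apply, Complex.one_re] at h2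
    rw [← h2]; congr 1; ext i
    simp only [hDdef, Complex.normSq_apply, Complex.mul_re, RCLike.star_def,
      Complex.conj_re, Complex.conj_im]
    ring
  -- diagonal entries
  have hdiag : ∀ i, (B i i).re = ∑ j, D i j * μ j := by
    intro i
    have h1 : (B i i).re = ∑ j, hB.eigenvalues j * Complex.normSq (U i j) := by
      conv_lhs => rw [hB.spectral_theorem, Unitary.conjStarAlgAut_apply]
      rw [Matrix.mul_apply]
      simp only [Matrix.mul_diagonal, Matrix.star_apply]
      rw [Complex.re_sum]
      congr 1; ext j
      simp only [hUdef, Complex.normSq_apply, Complex.mul_re, Complex.mul_im,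
        RCLike.star_def, Complex.conj_re, Complex.conj_im, Function.comp_apply,
        RCLike.ofReal_re, RCLike.ofReal_im, Complex.ofReal_re, Complex.ofReal_im]
      norm_num [RCLike.ofReal_re, RCLike.ofReal_im]
      ring
    rw [h1, ← Equiv.sum_comp e (fun j => hB.eigenvalues j * Complex.normSq (U i j))]
    congr 1; ext j
    rw [← he j]; ring
  -- the discrepancy function
  set d : Fin n → ℝ := fun i => (∑ j, D i j * μ j) - μ i with hddef
  -- total sum is zero
  have htot : ∑ i, d i = 0 := by
    have hs : ∑ i, ∑ j, D i j * μ j = ∑ j : Fin n, μ j := by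
      rw [Finset.sum_comm]
      calc ∑ j, ∑ i, D i j * μ j = ∑ j, (∑ i, D i j) * μ j := by
            congr 1; ext j; rw [Finset.sum_mul]
        _ = ∑ j : Fin n, μ j := by simp [hcol]
    simp only [hddef, Finset.sum_sub_distrib, hs, sub_self]
  -- prefix sums are nonpositive
  have hprefix : ∀ p, p < n → ∑ j : Fin n, (if (j : ℕ) < p then (1:ℝ) else 0) * d j ≤ 0 := by
    intro p hp
    set I : Fin n → ℝ := fun j => if (j : ℕ) < p then (1:ℝ) else 0 with hIdef
    set c : Fin n → ℝ := fun m => ∑ j, I j * D j m with hcdef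
    set t : ℝ := μ ⟨p, hp⟩ with htdef
    have hc1 : ∀ m, c m ≤ 1 := by
      intro m
      calc c m ≤ ∑ j, D j m := by
            apply Finset.sum_le_sum
            intro j _
            by_cases h : (j : ℕ) < p <;> simp [hIdef, h, hD0]
        _ = 1 := hcol m
    have hc0 : ∀ m, 0 ≤ c m := by
      intro m
      apply Finset.sum_nonneg
      intro j _
      by_cases h : (j : ℕ) < p <;> simp [hIdef, h, hD0]
    have hcsum : ∑ m, c m = ∑ m, I m := by
      rw [Finset.sum_comm]
      congr 1; ext j
      rw [← Finset.mul_sum, hrow, mul_one]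
    have key : ∀ m, (c m - I m) * (μ m - t) ≤ 0 := by
      intro m
      by_cases h : (m : ℕ) < p
      · have hμm : t ≤ μ m := hμa (by simp [Fin.le_def]; omega)
        have h2 : c m - I m ≤ 0 := by simp only [hIdef, if_pos h]; linarith [hc1 m]
        nlinarith
      · have hμm : μ m ≤ t := hμa (by simp [Fin.le_def]; omega)
        have h2 : 0 ≤ c m - I m := by simp only [hIdef, if_neg h]; linarith [hc0 m]
        nlinarith
    have hkey : ∑ m, (c m - I m) * (μ m - t) ≤ 0 :=
      Finset.sum_nonpos (fun m _ => key m)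
    have hexp : ∑ m, (c m - I m) * (μ m - t)
        = (∑ m, c m * μ m) - (∑ m, I m * μ m) - ((∑ m, c m) - (∑ m, I m)) * t := by
      rw [sub_mul, Finset.sum_mul, Finset.sum_mul]
      rw [← Finset.sum_sub_distrib, ← Finset.sum_sub_distrib, ← Finset.sum_sub_distrib]
      congr 1; ext m; ring
    rw [hexp, hcsum, sub_self, zero_mul, sub_zero] at hkey
    have hswap : ∑ j : Fin n, I j * (∑ m, D j m * μ m) = ∑ m, c m * μ m := by
      calc ∑ j : Fin n, I j * (∑ m, D j m * μ m)
          = ∑ j : Fin n, ∑ m, I j * D j m * μ m := by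
            congr 1; ext j; rw [Finset.mul_sum]; congr 1; ext m; ring
        _ = ∑ m, ∑ j : Fin n, I j * D j m * μ m := Finset.sum_comm
        _ = ∑ m, c m * μ m := by
            congr 1; ext m; rw [hcdef]; rw [Finset.sum_mul]
    calc ∑ j : Fin n, I j * d j
        = ∑ j : Fin n, (I j * (∑ m, D j m * μ m) - I j * μ j) := by
          congr 1; ext j; simp only [hddef]; ring
      _ = (∑ m, c m * μ m) - (∑ m, I m * μ m) := by
          rw [Finset.sum_sub_distrib, hswap]
      _ ≤ 0 := hkey
  -- summation by parts
  have hn1 : n - 1 < n := by omega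
  set F' : ℕ → ℝ := fun k => F ⟨min k (n-1), by omega⟩ with hF'def
  set d' : ℕ → ℝ := fun k => if h : k < n then d ⟨k, h⟩ else 0 with hd'def
  have hFd : ∑ i, F i * d i = ∑ k ∈ range n, F' k • d' k := by
    rw [← Fin.sum_univ_eq_sum_range (fun k => F' k • d' k) n]
    congr 1; ext i
    have h1 : F' (i : ℕ) = F i := by
      simp only [hF'def]; congr 1; ext; simp; omega
    have h2 : d' (i : ℕ) = d i := by
      simp only [hd'def, dif_pos i.isLt]
    rw [h1, h2, smul_eq_mul]
  have hGn : ∑ k ∈ range n, d' k = 0 := by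
    rw [← Fin.sum_univ_eq_sum_range (fun k => d' k) n, ← htot]
    congr 1; ext i; simp only [hd'def, dif_pos i.isLt]
  have hprefix' : ∀ p, p < n → ∑ k ∈ range p, d' k ≤ 0 := by
    intro p hp
    have heq : ∑ k ∈ range p, d' k = ∑ j : Fin n, (if (j : ℕ) < p then (1:ℝ) else 0) * d j := by
      have e1 : ∑ k ∈ range p, (if k < p then (1:ℝ) else 0) * d' k
          = ∑ k ∈ range n, (if k < p then (1:ℝ) else 0) * d' k := by
        apply Finset.sum_subset (Finset.range_subset_range.mpr (le_of_lt hp))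
        intro k _ hk
        rw [if_neg (by simpa using fun h => hk (Finset.mem_range.mpr h)), zero_mul]
      have e2 : ∑ k ∈ range p, (if k < p then (1:ℝ) else 0) * d' k = ∑ k ∈ range p, d' k := by
        apply Finset.sum_congr rfl
        intro k hk
        rw [if_pos (Finset.mem_range.mp hk), one_mul]
      rw [← e2, e1, ← Fin.sum_univ_eq_sum_range (fun k => (if k < p then (1:ℝ) else 0) * d' k) n]
      congr 1; ext j
      simp only [hd'def, dif_pos j.isLt]
    rw [heq]
    exact hprefix p hp
  have hbp := Finset.sum_range_by_parts F' d' n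
  rw [hGn, smul_zero, zero_sub] at hbp
  have hnonneg : 0 ≤ ∑ i, F i * d i := by
    rw [hFd, hbp, neg_nonneg]
    apply Finset.sum_nonpos
    intro k hk
    have hk' : k < n - 1 := Finset.mem_range.mp hk
    have hmono : F' k ≤ F' (k + 1) := by
      apply hFmono
      simp only [Fin.mk_le_mk]
      omega
    have hpre : ∑ j ∈ range (k + 1), d' j ≤ 0 := hprefix' (k + 1) (by omega)
    rw [smul_eq_mul]
    exact mul_nonpos_of_nonneg_of_nonpos (by linarith) hpre
  have hfinal : ∑ i, F i * (B i i).re = ∑ i, F i * μ i + ∑ i, F i * d i := by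
    rw [← Finset.sum_add_distrib]
    congr 1; ext i
    rw [hdiag i]; simp only [hddef]; ring
  linarith
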